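/- arXiv:2601.16063 — 2 statements merged into one kernel-verified Lean document; each statement's English description precedes it below -/
import Mathlib

section
/- Let p ≥ 2, let n > N ≥ 1 be fixed, and let ε_n > 0 be such that the ε_n-ball hypergraph H_n on Ω_n is connected. Then there exists a unique function u_n : Ω_n → ℝ satisfying L^{H_n}_{p,ε_n} u_n(x_i) = 0 for every x_i ∈ Ω_n∖𝒪 and u_n(x_i) = f(x_i) for every x_i ∈ 𝒪. -/
open scoped RealInnerProductSpace ENNReal
open MeasureTheory Metric Filter

noncomputable section

abbrev Euc (d : ℕ) := EuclideanSpace ℝ (Fin d)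

def sigma1 (d : ℕ) [NeZero d] (η : ℝ → ℝ) : ℝ :=
  (1 / 2) * ∫ y in ball (0 : Euc d) 1, η ‖y‖ * (y 0) ^ 2

def sigma2 (d : ℕ) (η : ℝ → ℝ) : ℝ :=
  (1 / 2) * ∫ y in ball (0 : Euc d) 1, η ‖y‖

def kVal (d : ℕ) [NeZero d] (η : ℝ → ℝ) (p : ℝ) : ℝ :=
  Real.sqrt ((p - 2) * sigma1 d η / sigma2 d η)

def etaChi (d : ℕ) (η : ℝ → ℝ) (ε s : ℝ) : ℝ :=
  if s < ε then (ε ^ d)⁻¹ * η (s / ε) else 0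

def Msup {d n : ℕ} (x : Fin n → Euc d) (r : ℝ) (u : Fin n → ℝ) (j : Fin n) : ℝ :=
  sSup (u '' {l | dist (x l) (x j) ≤ r})

def Minf {d n : ℕ} (x : Fin n → Euc d) (r : ℝ) (u : Fin n → ℝ) (j : Fin n) : ℝ :=
  sInf (u '' {l | dist (x l) (x j) ≤ r})

def LH {d : ℕ} [NeZero d] (η : ℝ → ℝ) (p ε : ℝ) {n : ℕ} (x : Fin n → Euc d)
    (u : Fin n → ℝ) (i : Fin n) : ℝ :=
  (1 / (2 * (n : ℝ) * ε ^ 2)) *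
    ∑ j, etaChi d η ε (dist (x i) (x j)) *
      (Msup x (kVal d η p * ε) u j + Minf x (kVal d η p * ε) u j - 2 * u i)

def KernelAssumptions (η : ℝ → ℝ) : Prop :=
  (∀ s ∈ Set.Ici (0:ℝ), 0 ≤ η s) ∧ AntitoneOn η (Set.Ici 0) ∧
    (∃ L : NNReal, LipschitzOnWith L η (Set.Ici 0)) ∧ η 0 ≤ 2 ∧ 1 ≤ η 1

def lapl {d : ℕ} (φ : Euc d → ℝ) (x : Euc d) : ℝ :=
  ∑ i, ⟪fderiv ℝ (gradient φ) x (EuclideanSpace.single i (1:ℝ)), EuclideanSpace.single i (1:ℝ)⟫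

def hessI {d : ℕ} (φ : Euc d → ℝ) (x v : Euc d) : ℝ :=
  ⟪fderiv ℝ (gradient φ) x v, v⟫

def wLap {d : ℕ} (ρ φ : Euc d → ℝ) (x : Euc d) : ℝ :=
  ρ x * lapl φ x + 2 * ⟪gradient ρ x, gradient φ x⟫

def wInfLap {d : ℕ} (ρ φ : Euc d → ℝ) (x : Euc d) : ℝ :=
  ρ x * (‖gradient φ x‖ ^ 2)⁻¹ * hessI φ x (gradient φ x)

def Lp (d : ℕ) [NeZero d] (η : ℝ → ℝ) (p : ℝ) (ρ φ : Euc d → ℝ) (x : Euc d) : ℝ :=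
  sigma1 d η * wLap ρ φ x + (kVal d η p) ^ 2 * sigma2 d η * wInfLap ρ φ x

def MsupC {d : ℕ} (Ω : Set (Euc d)) (φ : Euc d → ℝ) (r : ℝ) (y : Euc d) : ℝ :=
  sSup (φ '' (closedBall y r ∩ closure Ω))

def MinfC {d : ℕ} (Ω : Set (Euc d)) (φ : Euc d → ℝ) (r : ℝ) (y : Euc d) : ℝ :=
  sInf (φ '' (closedBall y r ∩ closure Ω))

def Lpe (d : ℕ) [NeZero d] (η : ℝ → ℝ) (p : ℝ) (Ω : Set (Euc d)) (ρ φ : Euc d → ℝ)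
    (ε : ℝ) (x : Euc d) : ℝ :=
  (1 / (2 * ε ^ 2)) * ∫ y in Ω,
    etaChi d η ε (dist x y) *
      (MsupC Ω φ (kVal d η p * ε) y + MinfC Ω φ (kVal d η p * ε) y - 2 * φ x) * ρ y

def divPLap {d : ℕ} (p : ℝ) (ρ φ : Euc d → ℝ) (x : Euc d) : ℝ :=
  ‖gradient φ x‖ ^ (p - 2) *
    ((ρ x) ^ 2 * lapl φ x + 2 * ρ x * ⟪gradient ρ x, gradient φ x⟫ +
      (p - 2) * (ρ x) ^ 2 * (‖gradient φ x‖ ^ 2)⁻¹ * hessI φ x (gradient φ x))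

def IsViscSubsol {d : ℕ} (p : ℝ) (Ω O : Set (Euc d)) (ρ : Euc d → ℝ) (ν : Euc d → Euc d)
    (u : Euc d → ℝ) : Prop :=
  UpperSemicontinuousOn u (closure Ω) ∧
    ∀ φ : Euc d → ℝ, ContDiff ℝ 2 φ →
      ∀ x₀ ∈ closure Ω \ O,
        (∀ y ∈ closure Ω, y ≠ x₀ → u y - φ y < u x₀ - φ x₀) →
        gradient φ x₀ ≠ 0 →
        (x₀ ∈ Ω → -divPLap p ρ φ x₀ ≤ 0) ∧
        (x₀ ∈ frontier Ω → min (-divPLap p ρ φ x₀) ⟪gradient φ x₀, ν x₀⟫ ≤ 0)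

def IsViscSol {d : ℕ} (p : ℝ) (Ω O : Set (Euc d)) (ρ : Euc d → ℝ) (ν : Euc d → Euc d)
    (u : Euc d → ℝ) : Prop :=
  ContinuousOn u (closure Ω) ∧ IsViscSubsol p Ω O ρ ν u ∧
    IsViscSubsol p Ω O ρ ν (fun x => -u x)

def IsTransportMap {d n : ℕ} (Ω : Set (Euc d)) (ρ : Euc d → ℝ) (x : Fin n → Euc d)
    (T : Euc d → Euc d) : Prop :=
  Measurable T ∧ (∀ y ∈ Ω, T y ∈ Set.range x) ∧
    Measure.map T ((volume.restrict Ω).withDensity fun y => ENNReal.ofReal (ρ y)) =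
      (n : ℝ≥0∞)⁻¹ • ∑ i, Measure.dirac (x i)

def idTnorm {d : ℕ} (Ω : Set (Euc d)) (T : Euc d → Euc d) : ℝ :=
  (essSup (fun y => edist y (T y)) (volume.restrict Ω)).toReal

def muDens {d : ℕ} (Ω : Set (Euc d)) (ρ : Euc d → ℝ) : Measure (Euc d) :=
  (volume.restrict Ω).withDensity fun y => ENNReal.ofReal (ρ y)

def deltaN (d n : ℕ) : ℝ :=
  if d = 2 then (Real.log n) ^ ((3:ℝ)/4) / Real.sqrt n else (Real.log n / n) ^ ((1:ℝ)/d)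

def pts {d N : ℕ} (o : Fin N → Euc d) (xs : ℕ → Euc d) (n : ℕ) : Fin n → Euc d :=
  fun i => if h : (i : ℕ) < N then o ⟨i, h⟩ else xs ((i : ℕ) - N)

def DiscSol {d : ℕ} [NeZero d] (η : ℝ → ℝ) (p ε : ℝ) {N n : ℕ} (o : Fin N → Euc d)
    (f : Fin N → ℝ) (xs : ℕ → Euc d) (u : Fin n → ℝ) : Prop :=
  (∀ i : Fin n, N ≤ (i : ℕ) → LH η p ε (pts o xs n) u i = 0) ∧
  (∀ i : Fin n, ∀ h : (i : ℕ) < N, u i = f ⟨i, h⟩)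

namespace S0
variable {d n : ℕ}

lemma Msup_attain (x : Fin n → Euc d) {r : ℝ} (hr : 0 ≤ r) (u : Fin n → ℝ) (j : Fin n) :
    ∃ l, dist (x l) (x j) ≤ r ∧ u l = Msup x r u j := by
  have hne : (u '' {l | dist (x l) (x j) ≤ r}).Nonempty :=
    ⟨u j, j, by simpa [Set.mem_setOf_eq, dist_self] using hr, rfl⟩
  obtain ⟨l, hl, hul⟩ := hne.csSup_mem (Set.toFinite _)
  exact ⟨l, hl, hul⟩

lemma le_Msup (x : Fin n → Euc d) {r : ℝ} (u : Fin n → ℝ) {j l : Fin n}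
    (hl : dist (x l) (x j) ≤ r) : u l ≤ Msup x r u j :=
  le_csSup (Set.toFinite _).bddAbove ⟨l, hl, rfl⟩

lemma Minf_attain (x : Fin n → Euc d) {r : ℝ} (hr : 0 ≤ r) (u : Fin n → ℝ) (j : Fin n) :
    ∃ l, dist (x l) (x j) ≤ r ∧ u l = Minf x r u j := by
  have hne : (u '' {l | dist (x l) (x j) ≤ r}).Nonempty :=
    ⟨u j, j, by simpa [Set.mem_setOf_eq, dist_self] using hr, rfl⟩
  obtain ⟨l, hl, hul⟩ := hne.csInf_mem (Set.toFinite _)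
  exact ⟨l, hl, hul⟩

lemma Minf_le (x : Fin n → Euc d) {r : ℝ} (u : Fin n → ℝ) {j l : Fin n}
    (hl : dist (x l) (x j) ≤ r) : Minf x r u j ≤ u l :=
  csInf_le (Set.toFinite _).bddBelow ⟨l, hl, rfl⟩

lemma Msup_le_shift (x : Fin n → Euc d) {r : ℝ} (hr : 0 ≤ r) (u v : Fin n → ℝ) (t : ℝ)
    (h : ∀ l, u l ≤ v l + t) (j : Fin n) : Msup x r u j ≤ Msup x r v j + t := by
  obtain ⟨l, hl, hul⟩ := Msup_attain x hr u j
  calc Msup x r u j = u l := hul.symm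
    _ ≤ v l + t := h l
    _ ≤ Msup x r v j + t := by have := le_Msup x v hl; linarith

lemma Minf_le_shift (x : Fin n → Euc d) {r : ℝ} (hr : 0 ≤ r) (u v : Fin n → ℝ) (t : ℝ)
    (h : ∀ l, u l ≤ v l + t) (j : Fin n) : Minf x r u j ≤ Minf x r v j + t := by
  obtain ⟨l, hl, hvl⟩ := Minf_attain x hr v j
  calc Minf x r u j ≤ u l := Minf_le x u hl
    _ ≤ v l + t := h l
    _ = Minf x r v j + t := by rw [hvl]

lemma w_nonneg {η : ℝ → ℝ} (hηpos : ∀ s ∈ Set.Ici (0:ℝ), 0 ≤ η s) {ε : ℝ} (hε : 0 < ε)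
    {s : ℝ} (hs : 0 ≤ s) : 0 ≤ etaChi d η ε s := by
  unfold etaChi
  split
  · exact mul_nonneg (inv_nonneg.mpr (pow_nonneg hε.le d))
      (hηpos _ (Set.mem_Ici.mpr (div_nonneg hs hε.le)))
  · exact le_rfl

lemma w_pos {η : ℝ → ℝ} (hηanti : AntitoneOn η (Set.Ici 0)) (hη1 : 1 ≤ η 1) {ε : ℝ}
    (hε : 0 < ε) {s : ℝ} (hs0 : 0 ≤ s) (hs : s < ε) : 0 < etaChi d η ε s := by
  unfold etaChi
  rw [if_pos hs]
  refine mul_pos (inv_pos.mpr (pow_pos hε d)) ?_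
  have h1 : s / ε ≤ 1 := (div_le_one hε).mpr hs.le
  have h0 : (0:ℝ) ≤ s / ε := div_nonneg hs0 hε.le
  have := hηanti (Set.mem_Ici.mpr h0) (Set.mem_Ici.mpr zero_le_one) h1
  linarith

lemma w_zero {η : ℝ → ℝ} {ε s : ℝ} (hs : ¬ s < ε) : etaChi d η ε s = 0 := if_neg hs

end S0

namespace S0

lemma LH_eq_zero_iff {d : ℕ} [NeZero d] {η : ℝ → ℝ} {p ε : ℝ} {n : ℕ} (hn : 0 < n) (hε : 0 < ε)
    {x : Fin n → Euc d} (u : Fin n → ℝ) (i : Fin n) :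
    (LH η p ε x u i = 0) ↔
      (∑ j, etaChi d η ε (dist (x i) (x j)) *
        (Msup x (kVal d η p * ε) u j + Minf x (kVal d η p * ε) u j - 2 * u i) = 0) := by
  have h1 : (0:ℝ) < (n:ℝ) := by exact_mod_cast hn
  have hC : (1 / (2 * (n : ℝ) * ε ^ 2)) ≠ 0 := by positivity
  unfold LH
  constructor
  · intro h
    rcases mul_eq_zero.mp h with h | h
    · exact absurd h hC
    · exact h
  · intro h
    rw [h, mul_zero]

end S0

namespace S0

lemma comparison {d n N : ℕ} [NeZero d] {η : ℝ → ℝ} {p ε : ℝ} {x : Fin n → Euc d} {f : Fin n → ℝ}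
    (hηpos : ∀ s ∈ Set.Ici (0:ℝ), 0 ≤ η s) (hηanti : AntitoneOn η (Set.Ici 0)) (hη1 : 1 ≤ η 1)
    (hε : 0 < ε) (hN : 1 ≤ N) (hNn : N < n)
    (hconn : (SimpleGraph.fromRel fun i j : Fin n => dist (x i) (x j) < ε).Connected)
    {u v : Fin n → ℝ}
    (hu : ∀ i : Fin n, N ≤ (i:ℕ) → LH η p ε x u i = 0)
    (hbu : ∀ i : Fin n, (i:ℕ) < N → u i = f i)
    (hv : ∀ i : Fin n, N ≤ (i:ℕ) → LH η p ε x v i = 0)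
    (hbv : ∀ i : Fin n, (i:ℕ) < N → v i = f i)
    (i : Fin n) : u i ≤ v i := by
  have npos : 0 < n := by omega
  have hr : 0 ≤ kVal d η p * ε := mul_nonneg (Real.sqrt_nonneg _) hε.le
  set r := kVal d η p * ε with hrdef
  by_contra hcon
  have hne : (Finset.univ : Finset (Fin n)).Nonempty := ⟨i, Finset.mem_univ _⟩
  set t := Finset.univ.sup' hne (fun l => u l - v l) with htdef
  have htb : ∀ l, u l - v l ≤ t := fun l => by
    rw [htdef]; exact Finset.le_sup' (fun l => u l - v l) (Finset.mem_univ l)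
  have htpos : 0 < t := lt_of_lt_of_le (by linarith [lt_of_not_ge hcon]) (htb i)
  set s := Finset.univ.filter (fun l => u l - v l = t) with hsdef
  have hsne : s.Nonempty := by
    obtain ⟨i0, _, hi0⟩ := Finset.exists_mem_eq_sup' hne (fun l => u l - v l)
    exact ⟨i0, Finset.mem_filter.mpr ⟨Finset.mem_univ _, hi0.symm⟩⟩
  set c := s.sup' hsne u with hcdef
  have hcb : ∀ l ∈ s, u l ≤ c := fun l hl => Finset.le_sup' _ hl
  -- the propagation step
  have hself : ∀ j : Fin n, dist (x j) (x j) ≤ r := fun j => by simpa [dist_self] using hr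
  have step : ∀ i0 j0 : Fin n, (u i0 - v i0 = t ∧ u i0 = c) → dist (x i0) (x j0) < ε →
      (u j0 - v j0 = t ∧ u j0 = c) := by
    intro i0 j0 hPi0 hdj0
    obtain ⟨hdiff, huc⟩ := hPi0
    have hlab : N ≤ (i0:ℕ) := by
      by_contra hlt
      push_neg at hlt
      have : u i0 = v i0 := (hbu i0 hlt).trans (hbv i0 hlt).symm
      linarith
    have hEu : ∑ j, etaChi d η ε (dist (x i0) (x j)) *
        (Msup x r u j + Minf x r u j - 2 * u i0) = 0 :=
      (LH_eq_zero_iff npos hε u i0).mp (hu i0 hlab)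
    have hEv : ∑ j, etaChi d η ε (dist (x i0) (x j)) *
        (Msup x r v j + Minf x r v j - 2 * v i0) = 0 :=
      (LH_eq_zero_iff npos hε v i0).mp (hv i0 hlab)
    have hsh : ∀ l, u l ≤ v l + t := fun l => by linarith [htb l]
    have hMle : ∀ j, Msup x r u j ≤ Msup x r v j + t := Msup_le_shift x hr u v t hsh
    have hmle : ∀ j, Minf x r u j ≤ Minf x r v j + t := Minf_le_shift x hr u v t hsh
    have hw0 : ∀ j, 0 ≤ etaChi d η ε (dist (x i0) (x j)) :=
      fun j => w_nonneg hηpos hε dist_nonneg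
    have hwpos : ∀ j, dist (x i0) (x j) < ε → 0 < etaChi d η ε (dist (x i0) (x j)) :=
      fun j hj => w_pos hηanti hη1 hε dist_nonneg hj
    -- subtraction
    have hsum0 : ∑ j, etaChi d η ε (dist (x i0) (x j)) *
        ((Msup x r u j - Msup x r v j - t) + (Minf x r u j - Minf x r v j - t)) = 0 := by
      have hrw : ∀ j ∈ Finset.univ, etaChi d η ε (dist (x i0) (x j)) *
          ((Msup x r u j - Msup x r v j - t) + (Minf x r u j - Minf x r v j - t)) =
          etaChi d η ε (dist (x i0) (x j)) * (Msup x r u j + Minf x r u j - 2 * u i0) -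
          etaChi d η ε (dist (x i0) (x j)) * (Msup x r v j + Minf x r v j - 2 * v i0) := by
        intro j _
        have : u i0 = v i0 + t := by linarith
        rw [this]; ring
      rw [Finset.sum_congr rfl hrw, Finset.sum_sub_distrib, hEu, hEv, sub_zero]
    have hterm : ∀ j ∈ Finset.univ, etaChi d η ε (dist (x i0) (x j)) *
        ((Msup x r u j - Msup x r v j - t) + (Minf x r u j - Minf x r v j - t)) ≤ 0 := by
      intro j _
      exact mul_nonpos_of_nonneg_of_nonpos (hw0 j) (by have := hMle j; have := hmle j; linarith)
    have hzero := (Finset.sum_eq_zero_iff_of_nonpos hterm).mp hsum0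
    have hMeq : ∀ j, dist (x i0) (x j) < ε →
        Msup x r u j = Msup x r v j + t ∧ Minf x r u j = Minf x r v j + t := by
      intro j hj
      have h1 := hzero j (Finset.mem_univ j)
      have h2 : (Msup x r u j - Msup x r v j - t) + (Minf x r u j - Minf x r v j - t) = 0 := by
        rcases mul_eq_zero.mp h1 with h | h
        · exact absurd h (ne_of_gt (hwpos j hj))
        · exact h
      constructor
      · have := hMle j; have := hmle j; linarith
      · have := hMle j; have := hmle j; linarith
    -- Msup u ≤ c on neighbors
    have hMuc : ∀ j, dist (x i0) (x j) < ε → Msup x r u j ≤ c := by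
      intro j hj
      obtain ⟨l, hl, hul⟩ := Msup_attain x hr u j
      have hvl : v l ≤ Msup x r v j := le_Msup x v hl
      have hlt : u l - v l = t := by
        have h1 := (hMeq j hj).1
        have h2 := hsh l
        linarith [hul]
      exact hul ▸ hcb l (Finset.mem_filter.mpr ⟨Finset.mem_univ _, hlt⟩)
    -- each term of hEu nonpositive
    have hterm2 : ∀ j ∈ Finset.univ, etaChi d η ε (dist (x i0) (x j)) *
        (Msup x r u j + Minf x r u j - 2 * u i0) ≤ 0 := by
      intro j _
      by_cases hj : dist (x i0) (x j) < ε
      · refine mul_nonpos_of_nonneg_of_nonpos (hw0 j) ?_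
        have h1 := hMuc j hj
        have h2 : Minf x r u j ≤ Msup x r u j :=
          le_trans (Minf_le x u (hself j)) (le_Msup x u (hself j))
        linarith
      · rw [w_zero hj, zero_mul]
    have hz2 := (Finset.sum_eq_zero_iff_of_nonpos hterm2).mp hEu
    have hb0 : Msup x r u j0 + Minf x r u j0 - 2 * u i0 = 0 := by
      rcases mul_eq_zero.mp (hz2 j0 (Finset.mem_univ _)) with h | h
      · exact absurd h (ne_of_gt (hwpos j0 hdj0))
      · exact h
    have hMj0 : Msup x r u j0 = c ∧ Minf x r u j0 = c := by
      have h1 := hMuc j0 hdj0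
      have h2 : Minf x r u j0 ≤ Msup x r u j0 :=
        le_trans (Minf_le x u (hself j0)) (le_Msup x u (hself j0))
      constructor <;> linarith
    have huj0 : u j0 = c := by
      have h1 := le_Msup x u (hself j0)
      have h2 := Minf_le x u (hself j0)
      rw [hMj0.1] at h1; rw [hMj0.2] at h2
      linarith
    have hvj0 : v j0 = c - t := by
      have hMv : Msup x r v j0 = c - t := by have := (hMeq j0 hdj0).1; linarith [hMj0.1]
      have hmv : Minf x r v j0 = c - t := by have := (hMeq j0 hdj0).2; linarith [hMj0.2]
      have h1 := le_Msup x v (hself j0)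
      have h2 := Minf_le x v (hself j0)
      rw [hMv] at h1; rw [hmv] at h2
      linarith
    exact ⟨by linarith, huj0⟩
  -- connectivity: propagate to a labeled vertex
  obtain ⟨istart, hiss, hisu⟩ := Finset.exists_mem_eq_sup' hsne u
  have hPstart : u istart - v istart = t ∧ u istart = c :=
    ⟨(Finset.mem_filter.mp hiss).2, hisu.symm⟩
  set i1 : Fin n := ⟨0, by omega⟩ with hi1def
  have key : ∀ {A B : Fin n}
      (q : (SimpleGraph.fromRel fun i j : Fin n => dist (x i) (x j) < ε).Walk A B),
      (u A - v A = t ∧ u A = c) → (u B - v B = t ∧ u B = c) := by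
    intro A B q
    induction q with
    | nil => exact id
    | cons h q ih =>
      intro hA
      rw [SimpleGraph.fromRel_adj] at h
      rcases h.2 with hd | hd
      · exact ih (step _ _ hA hd)
      · exact ih (step _ _ hA (by rwa [dist_comm] at hd))
  obtain ⟨q⟩ := hconn.preconnected istart i1
  have hP1 := key q hPstart
  have hlab1 : (i1:ℕ) < N := by simpa [hi1def] using (show 0 < N by omega)
  have : u i1 = v i1 := (hbu i1 hlab1).trans (hbv i1 hlab1).symm
  linarith [hP1.1]

end S0

namespace S0

lemma existence {d n N : ℕ} [NeZero d] {η : ℝ → ℝ} {p ε : ℝ} {x : Fin n → Euc d} {f : Fin n → ℝ}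
    (hηpos : ∀ s ∈ Set.Ici (0:ℝ), 0 ≤ η s) (hηanti : AntitoneOn η (Set.Ici 0)) (hη1 : 1 ≤ η 1)
    (hε : 0 < ε) (hN : 1 ≤ N) (hNn : N < n) :
    ∃ u : Fin n → ℝ,
      (∀ i : Fin n, N ≤ (i:ℕ) → LH η p ε x u i = 0) ∧
      ∀ i : Fin n, (i:ℕ) < N → u i = f i := by
  have npos : 0 < n := by omega
  have hr : 0 ≤ kVal d η p * ε := mul_nonneg (Real.sqrt_nonneg _) hε.le
  set r := kVal d η p * ε with hrdef
  have hne : (Finset.univ : Finset (Fin n)).Nonempty :=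
    ⟨⟨0, npos⟩, Finset.mem_univ _⟩
  set a := Finset.univ.inf' hne f with hadef
  set b := Finset.univ.sup' hne f with hbdef
  have haf : ∀ i, a ≤ f i := fun i => by
    rw [hadef]; exact Finset.inf'_le f (Finset.mem_univ i)
  have hbf : ∀ i, f i ≤ b := fun i => by
    rw [hbdef]; exact Finset.le_sup' f (Finset.mem_univ i)
  have hab : a ≤ b := le_trans (haf ⟨0, npos⟩) (hbf ⟨0, npos⟩)
  have hw0 : ∀ i j : Fin n, 0 ≤ etaChi d η ε (dist (x i) (x j)) :=
    fun i j => w_nonneg hηpos hε dist_nonneg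
  have hwpos : ∀ i j : Fin n, dist (x i) (x j) < ε → 0 < etaChi d η ε (dist (x i) (x j)) :=
    fun i j hj => w_pos hηanti hη1 hε dist_nonneg hj
  set S : Fin n → ℝ := fun i => ∑ j, etaChi d η ε (dist (x i) (x j)) with hSdef
  have hS : ∀ i, 0 < S i := fun i =>
    Finset.sum_pos' (fun j _ => hw0 i j)
      ⟨i, Finset.mem_univ i, hwpos i i (by simpa [dist_self] using hε)⟩
  have hself : ∀ j : Fin n, dist (x j) (x j) ≤ r := fun j => by simpa [dist_self] using hr
  set G : (Fin n → ℝ) → (Fin n → ℝ) := fun u i =>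
    if (i:ℕ) < N then f i
    else (∑ j, etaChi d η ε (dist (x i) (x j)) * (Msup x r u j + Minf x r u j)) / (2 * S i)
    with hGdef
  have hnum : ∀ (i : Fin n) (q : ℝ), ∑ j, etaChi d η ε (dist (x i) (x j)) * (q + q)
      = q * (2 * S i) := by
    intro i q
    rw [hSdef]
    dsimp only
    rw [Finset.mul_sum, Finset.mul_sum]
    exact Finset.sum_congr rfl (fun j _ => by ring)
  -- monotonicity
  have hGmono : ∀ u v : Fin n → ℝ, (∀ l, u l ≤ v l) → ∀ i, G u i ≤ G v i := by
    intro u v h i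
    rw [hGdef]
    dsimp only
    split
    · exact le_rfl
    · refine div_le_div_of_nonneg_right ?_ (by have := hS i; linarith)
      refine Finset.sum_le_sum (fun j _ => ?_)
      refine mul_le_mul_of_nonneg_left (add_le_add ?_ ?_) (hw0 i j)
      · have := Msup_le_shift x hr u v 0 (fun l => by simpa using h l) j
        linarith
      · have := Minf_le_shift x hr u v 0 (fun l => by simpa using h l) j
        linarith
  -- bounds
  have hGbound : ∀ u : Fin n → ℝ, (∀ l, a ≤ u l ∧ u l ≤ b) → ∀ i, a ≤ G u i ∧ G u i ≤ b := by
    intro u h i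
    have hMb : ∀ j, Msup x r u j ≤ b := by
      intro j
      obtain ⟨l, hl, hul⟩ := Msup_attain x hr u j
      rw [← hul]; exact (h l).2
    have hma : ∀ j, a ≤ Minf x r u j := by
      intro j
      obtain ⟨l, hl, hul⟩ := Minf_attain x hr u j
      rw [← hul]; exact (h l).1
    have hMa : ∀ j, a ≤ Msup x r u j := fun j => le_trans (h j).1 (le_Msup x u (hself j))
    have hmb : ∀ j, Minf x r u j ≤ b := fun j => le_trans (Minf_le x u (hself j)) (h j).2
    rw [hGdef]
    dsimp only
    split
    · exact ⟨haf i, hbf i⟩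
    · constructor
      · rw [le_div_iff₀ (by have := hS i; linarith)]
        calc a * (2 * S i) = ∑ j, etaChi d η ε (dist (x i) (x j)) * (a + a) := (hnum i a).symm
          _ ≤ _ := Finset.sum_le_sum (fun j _ =>
              mul_le_mul_of_nonneg_left (add_le_add (hMa j) (hma j)) (hw0 i j))
      · rw [div_le_iff₀ (by have := hS i; linarith)]
        calc ∑ j, etaChi d η ε (dist (x i) (x j)) * (Msup x r u j + Minf x r u j)
            ≤ ∑ j, etaChi d η ε (dist (x i) (x j)) * (b + b) := Finset.sum_le_sum (fun j _ =>
              mul_le_mul_of_nonneg_left (add_le_add (hMb j) (hmb j)) (hw0 i j))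
          _ = b * (2 * S i) := hnum i b
  -- Knaster–Tarski
  set T : Set (Fin n → ℝ) := {u | (∀ l, a ≤ u l ∧ u l ≤ b) ∧ ∀ i, u i ≤ G u i} with hTdef
  have haT : (fun _ => a) ∈ T := by
    constructor
    · exact fun l => ⟨le_rfl, hab⟩
    · intro i
      rw [hGdef]
      dsimp only
      split
      · exact haf i
      · have hMa : ∀ j : Fin n, Msup x r (fun _ => a) j = a := by
          intro j
          obtain ⟨l, hl, hul⟩ := Msup_attain x hr (fun _ => a) j
          exact hul.symm
        have hma : ∀ j : Fin n, Minf x r (fun _ => a) j = a := by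
          intro j
          obtain ⟨l, hl, hul⟩ := Minf_attain x hr (fun _ => a) j
          exact hul.symm
        have : ∑ j, etaChi d η ε (dist (x i) (x j)) *
            (Msup x r (fun _ => a) j + Minf x r (fun _ => a) j) = a * (2 * S i) := by
          rw [← hnum i a]
          exact Finset.sum_congr rfl (fun j _ => by rw [hMa j, hma j])
        rw [this, mul_div_assoc, div_self (by have := hS i; linarith), mul_one]
  set U : Fin n → ℝ := fun i => sSup ((fun u : Fin n → ℝ => u i) '' T) with hUdef
  have hbdd : ∀ i : Fin n, BddAbove ((fun u : Fin n → ℝ => u i) '' T) := by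
    intro i
    refine ⟨b, ?_⟩
    rintro y ⟨w, hw, rfl⟩
    exact (hw.1 i).2
  have hTne2 : ∀ i : Fin n, ((fun u : Fin n → ℝ => u i) '' T).Nonempty :=
    fun i => ⟨a, (fun _ => a), haT, rfl⟩
  have hUb : ∀ u ∈ T, ∀ i, u i ≤ U i := by
    intro u hu i
    rw [hUdef]
    exact le_csSup (hbdd i) ⟨u, hu, rfl⟩
  have hUbounds : ∀ i, a ≤ U i ∧ U i ≤ b := by
    intro i
    constructor
    · exact hUb (fun _ => a) haT i
    · rw [hUdef]
      refine csSup_le (hTne2 i) ?_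
      rintro y ⟨w, hw, rfl⟩
      exact (hw.1 i).2
  have hUle : ∀ i, U i ≤ G U i := by
    intro i
    rw [hUdef]
    refine csSup_le (hTne2 i) ?_
    rintro y ⟨w, hw, rfl⟩
    exact le_trans (hw.2 i) (hGmono w U (fun l => hUb w hw l) i)
  have hGUT : G U ∈ T := by
    constructor
    · exact fun l => hGbound U hUbounds l
    · exact fun i => hGmono U (G U) hUle i
  have hfix : ∀ i, G U i = U i := fun i => le_antisymm (hUb (G U) hGUT i) (hUle i)
  -- U is the desired solution
  refine ⟨U, ?_, ?_⟩
  · intro i hi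
    have h1 := hfix i
    rw [hGdef] at h1
    dsimp only at h1
    rw [if_neg (by omega)] at h1
    rw [LH_eq_zero_iff npos hε U i]
    have h2S : (2 : ℝ) * S i ≠ 0 := by have := hS i; linarith
    have h2 : ∑ j, etaChi d η ε (dist (x i) (x j)) * (Msup x r U j + Minf x r U j)
        = U i * (2 * S i) := by
      rw [← h1, div_mul_cancel₀ _ h2S]
    calc ∑ j, etaChi d η ε (dist (x i) (x j)) * (Msup x r U j + Minf x r U j - 2 * U i)
        = (∑ j, etaChi d η ε (dist (x i) (x j)) * (Msup x r U j + Minf x r U j))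
          - ∑ j, etaChi d η ε (dist (x i) (x j)) * (U i + U i) := by
          rw [← Finset.sum_sub_distrib]
          exact Finset.sum_congr rfl (fun j _ => by ring)
      _ = 0 := by rw [h2, hnum i (U i)]; ring
  · intro i hi
    have h1 := hfix i
    rw [hGdef] at h1
    dsimp only at h1
    rw [if_pos hi] at h1
    exact h1.symm

end S0

theorem stmt0 {d : ℕ} [NeZero d] (hd : 2 ≤ d)
    (Ω : Set (Euc d)) (hΩb : Bornology.IsBounded Ω) (hΩconn : IsConnected Ω) (hΩo : IsOpen Ω)
    (η : ℝ → ℝ) (hη : KernelAssumptions η)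
    (p : ℝ) (hp : 2 ≤ p)
    (n N : ℕ) (hN : 1 ≤ N) (hNn : N < n)
    (x : Fin n → Euc d) (hxΩ : ∀ i, x i ∈ Ω) (hxinj : Function.Injective x)
    (f : Fin n → ℝ)
    (ε : ℝ) (hε : 0 < ε)
    (hconn : (SimpleGraph.fromRel fun i j : Fin n => dist (x i) (x j) < ε).Connected) :
    ∃! u : Fin n → ℝ,
      (∀ i : Fin n, N ≤ (i : ℕ) → LH η p ε x u i = 0) ∧
      ∀ i : Fin n, (i : ℕ) < N → u i = f i := by
  obtain ⟨hηpos, hηanti, -, -, hη1⟩ := hη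
  obtain ⟨u, hu1, hu2⟩ := S0.existence (x := x) (f := f) (p := p) hηpos hηanti hη1 hε hN hNn
  refine ⟨u, ⟨hu1, hu2⟩, ?_⟩
  rintro y ⟨hy1, hy2⟩
  funext i
  exact le_antisymm
    (S0.comparison hηpos hηanti hη1 hε hN hNn hconn hy1 hy2 hu1 hu2 i)
    (S0.comparison hηpos hηanti hη1 hε hN hNn hconn hu1 hu2 hy1 hy2 i)
end
end

section
/- Let U ⊂ ℝ^d be open, let φ be three times continuously differentiable on U, let x ∈ U with ∇φ(x) ≠ 0, and let k ≥ 0. Then there exist constants C > 0 and ε₀ > 0 such that for every ε ∈ (0, ε₀) with B̄(x, (1+k)ε) ⊂ U and every ŷ ∈ B̄(0,1): | max_{ẑ ∈ B̄(0,1)} φ(x + ε(ŷ + kẑ)) + min_{ẑ ∈ B̄(0,1)} φ(x + ε(ŷ + kẑ)) − 2φ(x) − 2ε⟨∇φ(x), ŷ⟩ − ε²(⟨D²φ(x)ŷ, ŷ⟩ + k²Δ_∞φ(x)) | ≤ Cε³, where Δ_∞φ(x) := |∇φ(x)|^{−2}⟨D²φ(x)∇φ(x), ∇φ(x)⟩.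 -/
open scoped RealInnerProductSpace ENNReal
open MeasureTheory Metric Filter

noncomputable section

set_option maxHeartbeats 1000000 in
lemma taylor3 {d : ℕ} {U : Set (Euc d)} (hU : IsOpen U) {φ : Euc d → ℝ}
    (hφ : ContDiffOn ℝ 3 φ U) {x : Euc d} (hx : x ∈ U) :
    ∃ r > (0:ℝ), ∃ L ≥ (0:ℝ), closedBall x r ⊆ U ∧
      ∀ w : Euc d, ‖w‖ ≤ r →
        |φ (x + w) - φ x - fderiv ℝ φ x w - 2⁻¹ * fderiv ℝ (fderiv ℝ φ) x w w|
          ≤ L * ‖w‖ ^ 3 := by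
  set F₁ := fderiv ℝ φ with hF₁
  set B := fderiv ℝ F₁ x with hB
  have hφx : ContDiffAt ℝ 3 φ x := hφ.contDiffAt (hU.mem_nhds hx)
  have hF1At : ContDiffAt ℝ 2 F₁ x := hφx.fderiv_right (by norm_num)
  have hF2At : ContDiffAt ℝ 1 (fderiv ℝ F₁) x := hF1At.fderiv_right (by norm_num)
  obtain ⟨L, t, ht, hlip⟩ := hF2At.exists_lipschitzOnWith
  have htU : t ∩ U ∈ nhds x := Filter.inter_mem ht (hU.mem_nhds hx)
  obtain ⟨r, hr, hball⟩ := Metric.nhds_basis_closedBall.mem_iff.1 htU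
  have hsub : closedBall x r ⊆ U := hball.trans Set.inter_subset_right
  have hsubt : closedBall x r ⊆ t := hball.trans Set.inter_subset_left
  -- differentiability facts
  have hdiffU : ∀ y ∈ U, HasFDerivAt F₁ (fderiv ℝ F₁ y) y := by
    intro y hy
    have h2 : ContDiffOn ℝ 2 F₁ U := hφ.fderiv_of_isOpen hU (by norm_num)
    exact ((h2.differentiableOn (by norm_num)).differentiableAt
      (hU.mem_nhds hy)).hasFDerivAt
  have hdiffφ : ∀ y ∈ U, HasFDerivAt φ (F₁ y) y := by
    intro y hy
    exact ((hφ.differentiableOn (by norm_num)).differentiableAt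
      (hU.mem_nhds hy)).hasFDerivAt
  have hsymm : ∀ v u : Euc d, B v u = B u v := fun v u =>
    hφx.isSymmSndFDerivAt (by norm_num) v u
  -- step 1
  have step1 : ∀ w : Euc d, ‖w‖ ≤ r → ‖F₁ (x + w) - F₁ x - B w‖ ≤ L * ‖w‖ ^ 2 := by
    intro w hw
    have hsB : closedBall x ‖w‖ ⊆ closedBall x r := closedBall_subset_closedBall hw
    have hmem1 : x ∈ closedBall x ‖w‖ := mem_closedBall_self (norm_nonneg w)
    have hmem2 : x + w ∈ closedBall x ‖w‖ := by simp [mem_closedBall_iff_norm]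
    have hf : ∀ y ∈ closedBall x ‖w‖,
        HasFDerivWithinAt (fun y => F₁ y - B (y - x)) (fderiv ℝ F₁ y - B)
          (closedBall x ‖w‖) y := by
      intro y hy
      have hyU : y ∈ U := hsub (hsB hy)
      have h1 : HasFDerivAt (fun y : Euc d => B (y - x)) B y := by
        have := (B.hasFDerivAt (x := y)).sub_const (B x)
        simpa [map_sub] using this
      exact ((hdiffU y hyU).sub h1).hasFDerivWithinAt
    have bound : ∀ y ∈ closedBall x ‖w‖, ‖fderiv ℝ F₁ y - B‖ ≤ (L : ℝ) * ‖w‖ := by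
      intro y hy
      have hyr : y ∈ closedBall x r := hsB hy
      have h0 := hlip.dist_le_mul y (hsubt hyr) x (hsubt (mem_closedBall_self hr.le))
      rw [dist_eq_norm, dist_eq_norm] at h0
      have h1 : ‖y - x‖ ≤ ‖w‖ := by
        simpa [dist_eq_norm] using mem_closedBall_iff_norm.1 hy
      calc ‖fderiv ℝ F₁ y - B‖ ≤ L * ‖y - x‖ := h0
        _ ≤ L * ‖w‖ := mul_le_mul_of_nonneg_left h1 L.coe_nonneg
    have key := Convex.norm_image_sub_le_of_norm_hasFDerivWithin_le hf bound
      (convex_closedBall x ‖w‖) hmem1 hmem2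
    have : F₁ (x + w) - B w - F₁ x = F₁ (x + w) - F₁ x - B w := by abel
    rw [← this]
    simpa [add_sub_cancel_left, sq, mul_assoc] using key
  refine ⟨r, hr, L, L.coe_nonneg, hsub, fun w hw => ?_⟩
  -- step 2
  have hsB : closedBall x ‖w‖ ⊆ closedBall x r := closedBall_subset_closedBall hw
  have hmem1 : x ∈ closedBall x ‖w‖ := mem_closedBall_self (norm_nonneg w)
  have hmem2 : x + w ∈ closedBall x ‖w‖ := by simp [mem_closedBall_iff_norm]
  have hf : ∀ y ∈ closedBall x ‖w‖,
      HasFDerivWithinAt (fun y => φ y - F₁ x (y - x) - 2⁻¹ * B (y - x) (y - x))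
        (F₁ y - F₁ x - B (y - x)) (closedBall x ‖w‖) y := by
    intro y hy
    have hyU : y ∈ U := hsub (hsB hy)
    have hA : HasFDerivAt φ (F₁ y) y := hdiffφ y hyU
    have hB1 : HasFDerivAt (fun y : Euc d => F₁ x (y - x)) (F₁ x) y := by
      have := ((F₁ x).hasFDerivAt (x := y)).sub_const (F₁ x x)
      simpa [map_sub] using this
    have hbil := (B.isBoundedBilinearMap).hasFDerivAt (y - x, y - x)
    have hpair : HasFDerivAt (fun y : Euc d => (y - x, y - x))
        ((ContinuousLinearMap.id ℝ (Euc d)).prod (ContinuousLinearMap.id ℝ (Euc d))) y :=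
      HasFDerivAt.prodMk ((hasFDerivAt_id y).sub_const x) ((hasFDerivAt_id y).sub_const x)
    have hquad := hbil.comp y hpair
    have hq2 : HasFDerivAt (fun y : Euc d => 2⁻¹ * B (y - x) (y - x))
        ((2⁻¹ : ℝ) • ((B.isBoundedBilinearMap.deriv (y - x, y - x)).comp
          ((ContinuousLinearMap.id ℝ (Euc d)).prod (ContinuousLinearMap.id ℝ (Euc d))))) y :=
      hquad.const_mul (2⁻¹ : ℝ)
    have heq : F₁ y - F₁ x - B (y - x) = F₁ y - F₁ x -
        (2⁻¹ : ℝ) • ((B.isBoundedBilinearMap.deriv (y - x, y - x)).comp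
          ((ContinuousLinearMap.id ℝ (Euc d)).prod (ContinuousLinearMap.id ℝ (Euc d)))) := by
      ext v
      simp [IsBoundedBilinearMap.deriv_apply, hsymm v (y - x)]
      ring
    rw [heq]
    exact ((hA.sub hB1).sub hq2).hasFDerivWithinAt
  have bound : ∀ y ∈ closedBall x ‖w‖, ‖F₁ y - F₁ x - B (y - x)‖ ≤ (L : ℝ) * ‖w‖ ^ 2 := by
    intro y hy
    have h1n : ‖y - x‖ ≤ ‖w‖ := by
      simpa [dist_eq_norm] using mem_closedBall_iff_norm.1 hy
    have hyr : ‖y - x‖ ≤ r := h1n.trans hw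
    have h1 := step1 (y - x) hyr
    rw [add_sub_cancel] at h1
    have h2 : ‖y - x‖ ^ 2 ≤ ‖w‖ ^ 2 := pow_le_pow_left₀ (norm_nonneg _) h1n 2
    exact h1.trans (mul_le_mul_of_nonneg_left h2 L.coe_nonneg)
  have key := Convex.norm_image_sub_le_of_norm_hasFDerivWithin_le hf bound
    (convex_closedBall x ‖w‖) hmem1 hmem2
  have hkey : |φ (x + w) - F₁ x w - 2⁻¹ * B w w - φ x| ≤ L * ‖w‖ ^ 2 * ‖w‖ := by
    simpa [add_sub_cancel_left, Real.norm_eq_abs] using key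
  calc |φ (x + w) - φ x - F₁ x w - 2⁻¹ * B w w|
      = |φ (x + w) - F₁ x w - 2⁻¹ * B w w - φ x| := by ring_nf
    _ ≤ L * ‖w‖ ^ 2 * ‖w‖ := hkey
    _ = L * ‖w‖ ^ 3 := by ring

def dualCLM (d : ℕ) : StrongDual ℝ (Euc d) →L[ℝ] Euc d :=
  LinearMap.mkContinuous
    { toFun := fun y => (InnerProductSpace.toDual ℝ (Euc d)).symm y
      map_add' := fun a b => map_add _ a b
      map_smul' := fun c y => by simpa using map_smulₛₗ (InnerProductSpace.toDual ℝ (Euc d)).symm c y }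
    1 (fun y => by simp)

lemma dualCLM_inner {d : ℕ} (y : StrongDual ℝ (Euc d)) (u : Euc d) :
    ⟪dualCLM d y, u⟫ = y u := InnerProductSpace.toDual_symm_apply


set_option maxHeartbeats 1000000 in
theorem stmt13 {d : ℕ} (U : Set (Euc d)) (hU : IsOpen U)
    (φ : Euc d → ℝ) (hφ : ContDiffOn ℝ 3 φ U)
    (x : Euc d) (hx : x ∈ U) (hgrad : gradient φ x ≠ 0)
    (k : ℝ) (hk : 0 ≤ k) :
    ∃ C > (0:ℝ), ∃ ε₀ > (0:ℝ), ∀ ε : ℝ, 0 < ε → ε < ε₀ →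
      closedBall x ((1 + k) * ε) ⊆ U →
      ∀ yh ∈ closedBall (0 : Euc d) 1,
        |sSup ((fun zh => φ (x + ε • (yh + k • zh))) '' closedBall (0 : Euc d) 1) +
          sInf ((fun zh => φ (x + ε • (yh + k • zh))) '' closedBall (0 : Euc d) 1) -
          2 * φ x - 2 * ε * ⟪gradient φ x, yh⟫ -
          ε ^ 2 * (hessI φ x yh +
            k ^ 2 * ((‖gradient φ x‖ ^ 2)⁻¹ * hessI φ x (gradient φ x)))| ≤ C * ε ^ 3 := by
  obtain ⟨r, hr, L, hL, hsubU, htay⟩ := taylor3 hU hφ hx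
  set g := gradient φ x with hgdef
  set B := fderiv ℝ (fderiv ℝ φ) x with hBdef
  have hφx : ContDiffAt ℝ 3 φ x := hφ.contDiffAt (hU.mem_nhds hx)
  have hdF : DifferentiableAt ℝ (fderiv ℝ φ) x :=
    (hφx.fderiv_right (m := 2) (by norm_num)).differentiableAt (by norm_num)
  have hgradH : HasFDerivAt (gradient φ) ((dualCLM d).comp B) x :=
    (dualCLM d).hasFDerivAt.comp x hdF.hasFDerivAt
  have hfd : fderiv ℝ (gradient φ) x = (dualCLM d).comp B := hgradH.fderiv
  have hinner : ∀ v u : Euc d, ⟪fderiv ℝ (gradient φ) x v, u⟫ = B v u := by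
    intro v u; rw [hfd]; exact dualCLM_inner _ _
  have hgradv : ∀ v : Euc d, ⟪g, v⟫ = fderiv ℝ φ x v := fun v =>
    InnerProductSpace.toDual_symm_apply
  have hhess : ∀ v : Euc d, hessI φ x v = B v v := fun v => hinner v v
  have hgpos : (0:ℝ) < ‖g‖ := norm_pos_iff.2 hgrad
  set nv : Euc d := ‖g‖⁻¹ • g with hnvdef
  have hnv : ‖nv‖ = 1 := by
    rw [hnvdef, norm_smul, Real.norm_eq_abs, abs_of_nonneg (inv_nonneg.2 hgpos.le)]
    field_simp
  have hgnv : ⟪g, nv⟫ = ‖g‖ := by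
    rw [hnvdef, real_inner_smul_right, real_inner_self_eq_norm_sq]
    field_simp
  have hgz : ∀ z : Euc d, ⟪g, z⟫ = ‖g‖ * ⟪z, nv⟫ := by
    intro z
    have hgnn : (‖g‖ : ℝ) • nv = g := by
      rw [hnvdef, smul_smul]
      rw [mul_inv_cancel₀ hgpos.ne', one_smul]
    conv_lhs => rw [← hgnn]
    rw [real_inner_smul_left, real_inner_comm]
  set C₁ : ℝ := k * (1+k)^2 * ‖B‖^2 / (2 * ‖g‖) with hC₁def
  have hC₁ : 0 ≤ C₁ := by positivity
  set M : ℝ := L * (1+k)^3 with hMdef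
  have hM : 0 ≤ M := by positivity
  have h1k : (0:ℝ) < 1 + k := by linarith
  refine ⟨C₁ + 2*M + 1, by positivity, r / (1+k), by positivity, ?_⟩
  intro ε hε hεr _ yh hyh
  have hyh1 : ‖yh‖ ≤ 1 := mem_closedBall_zero_iff.1 hyh
  have hε3 : (0:ℝ) < ε^3 := by positivity
  have hεk : ε * (1+k) ≤ r := by
    rw [lt_div_iff₀ h1k] at hεr; linarith
  set f : Euc d → ℝ := fun zh => φ (x + ε • (yh + k • zh)) with hfdef
  set P : Euc d → ℝ := fun z =>
    φ x + ε*⟪g,yh⟫ + ε*k*⟪g,z⟫ + 2⁻¹*ε^2*(B (yh+k•z) (yh+k•z)) with hPdef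
  have hnorm : ∀ z : Euc d, ‖z‖ ≤ 1 → ‖yh + k • z‖ ≤ 1 + k := by
    intro z hz
    calc ‖yh + k•z‖ ≤ ‖yh‖ + ‖k•z‖ := norm_add_le _ _
      _ ≤ 1 + k := by
          rw [norm_smul, Real.norm_eq_abs, abs_of_nonneg hk]
          nlinarith [norm_nonneg z]
  -- pointwise Taylor comparison
  have hfP : ∀ z ∈ closedBall (0:Euc d) 1, |f z - P z| ≤ M * ε^3 := by
    intro z hz
    have hz1 : ‖z‖ ≤ 1 := mem_closedBall_zero_iff.1 hz
    set w : Euc d := ε • (yh + k • z) with hwdef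
    have hwn : ‖w‖ ≤ ε * (1+k) := by
      rw [hwdef, norm_smul, Real.norm_eq_abs, abs_of_nonneg hε.le]
      exact mul_le_mul_of_nonneg_left (hnorm z hz1) hε.le
    have hwr : ‖w‖ ≤ r := hwn.trans hεk
    have ht := htay w hwr
    have e1 : fderiv ℝ φ x w = ε*(⟪g,yh⟫ + k*⟪g,z⟫) := by
      rw [← hgradv, hwdef, real_inner_smul_right, inner_add_right, real_inner_smul_right]
    have e2 : B w w = ε^2 * (B (yh+k•z) (yh+k•z)) := by
      rw [hwdef]
      simp [_root_.map_smul, smul_eq_mul]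
      ring
    have heq : f z - P z = φ (x+w) - φ x - fderiv ℝ φ x w - 2⁻¹ * B w w := by
      simp only [hfdef, hPdef, ← hwdef, e1, e2]
      ring
    rw [heq]
    calc |φ (x+w) - φ x - fderiv ℝ φ x w - 2⁻¹ * B w w| ≤ L * ‖w‖^3 := ht
      _ ≤ M * ε^3 := by
          rw [hMdef]
          have h3 : ‖w‖^3 ≤ (ε*(1+k))^3 := pow_le_pow_left₀ (norm_nonneg w) hwn 3
          calc L*‖w‖^3 ≤ L*(ε*(1+k))^3 := mul_le_mul_of_nonneg_left h3 hL
            _ = L*(1+k)^3*ε^3 := by ring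
  -- bilinear difference bound
  have hBd : ∀ u v : Euc d, |B u u - B v v| ≤ ‖B‖ * ‖u - v‖ * (‖u‖ + ‖v‖) := by
    intro u v
    have hid : B u u - B v v = B (u-v) u + B v (u-v) := by
      simp only [map_sub, ContinuousLinearMap.sub_apply]
      ring
    rw [hid]
    have h1 : |B (u-v) u| ≤ ‖B‖*‖u-v‖*‖u‖ := by
      have ha := (B (u-v)).le_opNorm u
      rw [Real.norm_eq_abs] at ha
      have hb := B.le_opNorm (u-v)
      calc |B (u-v) u| ≤ ‖B (u-v)‖ * ‖u‖ := ha
        _ ≤ ‖B‖*‖u-v‖*‖u‖ := mul_le_mul_of_nonneg_right hb (norm_nonneg u)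
    have h2 : |B v (u-v)| ≤ ‖B‖*‖v‖*‖u-v‖ := by
      have ha := (B v).le_opNorm (u-v)
      rw [Real.norm_eq_abs] at ha
      have hb := B.le_opNorm v
      calc |B v (u-v)| ≤ ‖B v‖ * ‖u-v‖ := ha
        _ ≤ ‖B‖*‖v‖*‖u-v‖ := mul_le_mul_of_nonneg_right hb (norm_nonneg _)
    calc |B (u-v) u + B v (u-v)| ≤ |B (u-v) u| + |B v (u-v)| := abs_add_le _ _
      _ ≤ ‖B‖*‖u-v‖*‖u‖ + ‖B‖*‖v‖*‖u-v‖ := add_le_add h1 h2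
      _ = ‖B‖ * ‖u-v‖ * (‖u‖ + ‖v‖) := by ring
  -- key quadratic inequality
  have hquad : ∀ t : ℝ, 0 ≤ t →
      ε*k*(-(‖g‖*t^2/2)) + 2⁻¹*ε^2*(2*‖B‖*k*(1+k)*t) ≤ C₁*ε^3 := by
    intro t ht
    have h2g : (0:ℝ) < 2*‖g‖ := by positivity
    rw [← mul_le_mul_iff_of_pos_right h2g]
    have hre : C₁*ε^3*(2*‖g‖) = k*(1+k)^2*‖B‖^2*ε^3 := by
      rw [hC₁def]; field_simp
    rw [hre]
    have hkε : (0:ℝ) ≤ k*ε := mul_nonneg hk hε.le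
    nlinarith [mul_nonneg hkε (sq_nonneg (‖g‖*t - ε*(1+k)*‖B‖))]
  -- upper bound for P
  have hup : ∀ z ∈ closedBall (0:Euc d) 1, P z ≤ P nv + C₁*ε^3 := by
    intro z hz
    have hz1 : ‖z‖ ≤ 1 := mem_closedBall_zero_iff.1 hz
    have hz2 : ‖z‖^2 ≤ 1 := by nlinarith [norm_nonneg z]
    set t := ‖z - nv‖ with htdef
    have ht0 : 0 ≤ t := norm_nonneg _
    have ht2 : t^2 = ‖z‖^2 - 2*⟪z,nv⟫ + 1 := by
      rw [htdef, norm_sub_sq_real, hnv]; ring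
    have h1 : ⟪g,z⟫ - ⟪g,nv⟫ ≤ -(‖g‖*t^2/2) := by
      rw [hgnv, hgz z]
      have hzn : ⟪z,nv⟫ ≤ 1 - t^2/2 := by linarith
      have hm := mul_le_mul_of_nonneg_left hzn hgpos.le
      have h6 : ‖g‖*(1 - t^2/2) = ‖g‖ - ‖g‖*t^2/2 := by ring
      linarith
    have hd : (yh + k•z) - (yh + k•nv) = k•(z-nv) := by
      rw [smul_sub]; abel
    have hdn : ‖(yh + k•z) - (yh + k•nv)‖ = k * t := by
      rw [hd, norm_smul, Real.norm_eq_abs, abs_of_nonneg hk, htdef]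
    have h2 : B (yh+k•z) (yh+k•z) - B (yh+k•nv) (yh+k•nv) ≤ 2*‖B‖*k*(1+k)*t := by
      have habs := (abs_le.1 (hBd (yh+k•z) (yh+k•nv))).2
      rw [hdn] at habs
      have hu1 := hnorm z hz1
      have hu2 := hnorm nv hnv.le
      have h5 : ‖B‖*(k*t)*(‖yh+k•z‖+‖yh+k•nv‖) ≤ ‖B‖*(k*t)*(2*(1+k)) :=
        mul_le_mul_of_nonneg_left (by linarith) (by positivity)
      calc B (yh+k•z) (yh+k•z) - B (yh+k•nv) (yh+k•nv)
          ≤ ‖B‖*(k*t)*(‖yh+k•z‖+‖yh+k•nv‖) := habs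
        _ ≤ ‖B‖*(k*t)*(2*(1+k)) := h5
        _ = 2*‖B‖*k*(1+k)*t := by ring
    have hq := hquad t ht0
    have hPdiff : P z - P nv = ε*k*(⟪g,z⟫-⟪g,nv⟫) +
        2⁻¹*ε^2*(B (yh+k•z) (yh+k•z) - B (yh+k•nv) (yh+k•nv)) := by
      simp only [hPdef]; ring
    have hεk2 : (0:ℝ) ≤ ε*k := mul_nonneg hε.le hk
    have hε2 : (0:ℝ) ≤ 2⁻¹*ε^2 := by positivity
    have m1 := mul_le_mul_of_nonneg_left h1 hεk2
    have m2 := mul_le_mul_of_nonneg_left h2 hε2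
    have hfin : P z - P nv ≤ C₁ * ε^3 := by
      rw [hPdiff]
      exact le_trans (add_le_add m1 m2) hq
    linarith
  -- lower bound for P
  have hlo : ∀ z ∈ closedBall (0:Euc d) 1, P (-nv) - C₁*ε^3 ≤ P z := by
    intro z hz
    have hz1 : ‖z‖ ≤ 1 := mem_closedBall_zero_iff.1 hz
    have hz2 : ‖z‖^2 ≤ 1 := by nlinarith [norm_nonneg z]
    set t := ‖z + nv‖ with htdef
    have ht0 : 0 ≤ t := norm_nonneg _
    have ht2 : t^2 = ‖z‖^2 + 2*⟪z,nv⟫ + 1 := by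
      rw [htdef, norm_add_sq_real, hnv]; ring
    have h1 : ⟪g,-nv⟫ - ⟪g,z⟫ ≤ -(‖g‖*t^2/2) := by
      rw [inner_neg_right, hgnv, hgz z]
      have hzn : -(1:ℝ) + t^2/2 ≤ ⟪z,nv⟫ := by linarith
      have hm := mul_le_mul_of_nonneg_left hzn hgpos.le
      have h6 : ‖g‖*(-(1:ℝ) + t^2/2) = -‖g‖ + ‖g‖*t^2/2 := by ring
      linarith
    have hd : (yh + k•(-nv)) - (yh + k•z) = k•(-nv-z) := by
      rw [smul_sub]; abel
    have hdn : ‖(yh + k•(-nv)) - (yh + k•z)‖ = k * t := by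
      rw [hd, norm_smul, Real.norm_eq_abs, abs_of_nonneg hk, htdef]
      congr 1
      rw [show -nv - z = -(z + nv) by abel, norm_neg]
    have hmnv : ‖(-nv : Euc d)‖ ≤ 1 := by rw [norm_neg, hnv]
    have h2 : B (yh+k•(-nv)) (yh+k•(-nv)) - B (yh+k•z) (yh+k•z) ≤ 2*‖B‖*k*(1+k)*t := by
      have habs := (abs_le.1 (hBd (yh+k•(-nv)) (yh+k•z))).2
      rw [hdn] at habs
      have hu1 := hnorm z hz1
      have hu2 := hnorm (-nv) hmnv
      have h5 : ‖B‖*(k*t)*(‖yh+k•(-nv)‖+‖yh+k•z‖) ≤ ‖B‖*(k*t)*(2*(1+k)) :=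
        mul_le_mul_of_nonneg_left (by linarith) (by positivity)
      calc B (yh+k•(-nv)) (yh+k•(-nv)) - B (yh+k•z) (yh+k•z)
          ≤ ‖B‖*(k*t)*(‖yh+k•(-nv)‖+‖yh+k•z‖) := habs
        _ ≤ ‖B‖*(k*t)*(2*(1+k)) := h5
        _ = 2*‖B‖*k*(1+k)*t := by ring
    have hq := hquad t ht0
    have hPdiff : P (-nv) - P z = ε*k*(⟪g,-nv⟫-⟪g,z⟫) +
        2⁻¹*ε^2*(B (yh+k•(-nv)) (yh+k•(-nv)) - B (yh+k•z) (yh+k•z)) := by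
      simp only [hPdef]; ring
    have hεk2 : (0:ℝ) ≤ ε*k := mul_nonneg hε.le hk
    have hε2 : (0:ℝ) ≤ 2⁻¹*ε^2 := by positivity
    have m1 := mul_le_mul_of_nonneg_left h1 hεk2
    have m2 := mul_le_mul_of_nonneg_left h2 hε2
    have hfin : P (-nv) - P z ≤ C₁ * ε^3 := by
      rw [hPdiff]
      exact le_trans (add_le_add m1 m2) hq
    linarith
  -- sup/inf bounds
  have hKz : (0:Euc d) ∈ closedBall (0:Euc d) 1 := mem_closedBall_self zero_le_one
  have hnvK : nv ∈ closedBall (0:Euc d) 1 := mem_closedBall_zero_iff.2 hnv.le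
  have hmnvK : -nv ∈ closedBall (0:Euc d) 1 := by
    rw [mem_closedBall_zero_iff, norm_neg, hnv]
  have hne : (f '' closedBall (0:Euc d) 1).Nonempty := ⟨f 0, Set.mem_image_of_mem f hKz⟩
  have hubd : ∀ a ∈ f '' closedBall (0:Euc d) 1, a ≤ P nv + (C₁ + M)*ε^3 := by
    rintro a ⟨z, hz, rfl⟩
    have h1 := (abs_le.1 (hfP z hz)).2
    have h2 := hup z hz
    linarith
  have hlbd : ∀ a ∈ f '' closedBall (0:Euc d) 1, P (-nv) - (C₁+M)*ε^3 ≤ a := by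
    rintro a ⟨z, hz, rfl⟩
    have h1 := (abs_le.1 (hfP z hz)).1
    have h2 := hlo z hz
    linarith
  have hS1 : sSup (f '' closedBall (0:Euc d) 1) ≤ P nv + (C₁+M)*ε^3 := csSup_le hne hubd
  have hS2 : P nv - M*ε^3 ≤ sSup (f '' closedBall (0:Euc d) 1) := by
    have hm := le_csSup ⟨P nv + (C₁+M)*ε^3, hubd⟩ (Set.mem_image_of_mem f hnvK)
    have h1 := (abs_le.1 (hfP nv hnvK)).1
    linarith
  have hI1 : P (-nv) - (C₁+M)*ε^3 ≤ sInf (f '' closedBall (0:Euc d) 1) := le_csInf hne hlbd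
  have hI2 : sInf (f '' closedBall (0:Euc d) 1) ≤ P (-nv) + M*ε^3 := by
    have hm := csInf_le ⟨P (-nv) - (C₁+M)*ε^3, hlbd⟩ (Set.mem_image_of_mem f hmnvK)
    have h1 := (abs_le.1 (hfP (-nv) hmnvK)).2
    linarith
  -- algebraic identity for P nv + P (-nv)
  have hPsum : P nv + P (-nv) = 2*φ x + 2*ε*⟪g,yh⟫ +
      ε^2*(B yh yh + k^2*((‖g‖^2)⁻¹ * (B g g))) := by
    have h1 : ⟪g, -nv⟫ = -⟪g,nv⟫ := inner_neg_right g nv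
    have h2 : yh + k•(-nv) = yh - k•nv := by rw [smul_neg, ← sub_eq_add_neg]
    have h3 : B (yh + k•nv) (yh + k•nv) + B (yh - k•nv) (yh - k•nv)
        = 2*(B yh yh) + 2*(B (k•nv) (k•nv)) := by
      simp only [map_add, map_sub, ContinuousLinearMap.add_apply,
        ContinuousLinearMap.sub_apply]
      ring
    have h4 : B (k•nv) (k•nv) = k^2 * ((‖g‖^2)⁻¹ * B g g) := by
      rw [hnvdef]
      simp only [_root_.map_smul, ContinuousLinearMap.smul_apply, smul_eq_mul]
      rw [sq, sq, mul_inv]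
      ring
    simp only [hPdef, h1, h2, hgnv]
    linear_combination 2⁻¹*ε^2*h3 + ε^2*h4
  -- conclude
  rw [hhess yh, hhess g]
  rw [abs_le]
  have hup2 : sSup (f '' closedBall (0:Euc d) 1) + sInf (f '' closedBall (0:Euc d) 1)
      ≤ 2*φ x + 2*ε*⟪g,yh⟫ + ε^2*(B yh yh + k^2*((‖g‖^2)⁻¹ * (B g g))) + (C₁+2*M)*ε^3 := by
    rw [← hPsum]
    linarith [hS1, hI2]
  have hlo2 : 2*φ x + 2*ε*⟪g,yh⟫ + ε^2*(B yh yh + k^2*((‖g‖^2)⁻¹ * (B g g))) - (C₁+2*M)*ε^3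
      ≤ sSup (f '' closedBall (0:Euc d) 1) + sInf (f '' closedBall (0:Euc d) 1) := by
    rw [← hPsum]
    linarith [hS2, hI1]
  constructor
  · linarith [hlo2, hε3.le]
  · linarith [hup2, hε3.le]
end
end
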